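/- Let V : [0,∞) → M_n(ℂ) be continuous with V(x)† = V(x) for all x, let κ ∈ ℝ, let Q be an orthogonal projection, and let Φ : [0,∞) → M_n(ℂ) be twice continuously differentiable with Φ''(x) = (V(x) + κ²·I)·Φ(x), Φ(x)·Q = Φ(x), and Φ'(x)†·Φ(x) = Φ(x)†·Φ'(x) for all x ≥ 0. Let W, W⁺ : [0,∞) → M_n(ℂ) be differentiable with W'(x) = −Φ(x)†Φ(x), W(x)W⁺(x) = W⁺(x)W(x) = Q, and W⁺(x)·Q = Q·W⁺(x) = W⁺(x) for all x. Put 𝒜(x,y) := Φ(x)·W⁺(x)·Φ(y)† and Ṽ(x) := V(x) + 2·(d/dx)[Φ(x)W⁺(x)Φ(x)†]. Then 𝒜 satisfies the hyperbolic matrix partial differential equation 𝒜_xx(x,y) − 𝒜_yy(x,y) = Ṽ(x)·𝒜(x,y) − 𝒜(x,y)·V(y) for all x, y ≥ 0; here 𝒜_xx(x,y) is the second derivative of x ↦ Φ(x)W⁺(x)Φ(y)† and 𝒜_yy(x,y) = Φ(x)W⁺(x)·(Φ''(y))†. (Theorem 6.2(c)–(d).) -/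

import Mathlib

open Matrix MeasureTheory Set

attribute [local instance] Matrix.normedAddCommGroup Matrix.normedSpace

namespace GLPDEAux
variable {n : ℕ}

noncomputable def mulL : Matrix (Fin n) (Fin n) ℂ →L[ℝ] Matrix (Fin n) (Fin n) ℂ →L[ℝ] Matrix (Fin n) (Fin n) ℂ :=
  LinearMap.toContinuousLinearMap <|
    { toFun := fun A => LinearMap.toContinuousLinearMap (LinearMap.mulLeft ℝ A)
      map_add' := by intro A B; ext M i j; simp [add_mul]
      map_smul' := by intro c A; ext M i j; simp [smul_mul_assoc] }

lemma mulL_apply (A B : Matrix (Fin n) (Fin n) ℂ) : mulL A B = A * B := rfl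

noncomputable def ctL : Matrix (Fin n) (Fin n) ℂ →L[ℝ] Matrix (Fin n) (Fin n) ℂ :=
  LinearMap.toContinuousLinearMap
    { toFun := fun A => Aᴴ
      map_add' := fun A B => conjTranspose_add A B
      map_smul' := fun c A => by simp }

lemma matmul {f g : ℝ → Matrix (Fin n) (Fin n) ℂ} {f' g' : Matrix (Fin n) (Fin n) ℂ}
    {s : Set ℝ} {x : ℝ}
    (hf : HasDerivWithinAt f f' s x) (hg : HasDerivWithinAt g g' s x) :
    HasDerivWithinAt (fun t => f t * g t) (f' * g x + f x * g') s x := by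
  have hf2 : HasDerivWithinAt (𝕜 := ℝ) (F := Matrix (Fin n) (Fin n) ℂ) f f' s x := hf
  have hg2 : HasDerivWithinAt (𝕜 := ℝ) (F := Matrix (Fin n) (Fin n) ℂ) g g' s x := hg
  have h2 := mulL.hasDerivWithinAt_of_bilinear hf2 hg2
  rw [add_comm]
  exact h2

lemma matmul_const {f : ℝ → Matrix (Fin n) (Fin n) ℂ} {f' c : Matrix (Fin n) (Fin n) ℂ}
    {s : Set ℝ} {x : ℝ} (hf : HasDerivWithinAt f f' s x) :
    HasDerivWithinAt (fun t => f t * c) (f' * c) s x := by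
  simpa using matmul hf (hasDerivWithinAt_const x s c)

lemma matct {f : ℝ → Matrix (Fin n) (Fin n) ℂ} {f' : Matrix (Fin n) (Fin n) ℂ}
    {s : Set ℝ} {x : ℝ} (hf : HasDerivWithinAt f f' s x) :
    HasDerivWithinAt (fun t => (f t)ᴴ) (f'ᴴ) s x := by
  have hf2 : HasDerivWithinAt (𝕜 := ℝ) (F := Matrix (Fin n) (Fin n) ℂ) f f' s x := hf
  have := ctL.hasFDerivAt.comp_hasDerivWithinAt x hf2
  exact this

lemma deriv_unique {f : ℝ → Matrix (Fin n) (Fin n) ℂ} {f1 f2 : Matrix (Fin n) (Fin n) ℂ}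
    {x : ℝ} (hx : x ∈ Ici (0:ℝ))
    (h1 : HasDerivWithinAt f f1 (Ici (0:ℝ)) x) (h2 : HasDerivWithinAt f f2 (Ici (0:ℝ)) x) :
    f1 = f2 := by
  have hu : UniqueDiffWithinAt ℝ (Ici (0:ℝ)) x := uniqueDiffOn_Ici 0 x hx
  rw [← h1.derivWithin hu, ← h2.derivWithin hu]

end GLPDEAux

open GLPDEAux


/-- Theorem 6.2(c)–(d): with `𝒜(x,y) = Φ(x)·W⁺(x)·Φ(y)†` and
`Ṽ(x) = V(x) + 2·(d/dx)[Φ(x)W⁺(x)Φ(x)†]` (the derivative being `g`), the kernel `𝒜`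
satisfies the hyperbolic matrix PDE `𝒜_xx − 𝒜_yy = Ṽ(x)·𝒜 − 𝒜·V(y)`, where
`𝒜_x(x,y) = Φ'(x)W⁺(x)Φ(y)† + Φ(x)(W⁺)'(x)Φ(y)†`, `𝒜_xx` is its `x`-derivative, and
`𝒜_yy(x,y) = Φ(x)W⁺(x)·(Φ''(y))†`. -/
theorem gelfand_levitan_kernel_pde {n : ℕ}
    (V : ℝ → Matrix (Fin n) (Fin n) ℂ) (κ : ℝ)
    (Q : Matrix (Fin n) (Fin n) ℂ)
    (hQproj : Q * Q = Q) (hQherm : Qᴴ = Q)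
    (Φ Φ' Φ'' W Wp Wp' g : ℝ → Matrix (Fin n) (Fin n) ℂ)
    (hVc : ContinuousOn V (Set.Ici (0:ℝ)))
    (hVherm : ∀ x ≥ (0:ℝ), (V x)ᴴ = V x)
    (hΦ1 : ∀ x ∈ Set.Ici (0:ℝ), HasDerivWithinAt Φ (Φ' x) (Set.Ici (0:ℝ)) x)
    (hΦ2 : ∀ x ∈ Set.Ici (0:ℝ), HasDerivWithinAt Φ' (Φ'' x) (Set.Ici (0:ℝ)) x)
    (hΦ''c : ContinuousOn Φ'' (Set.Ici (0:ℝ)))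
    (hΦeq : ∀ x ≥ (0:ℝ), Φ'' x = (V x + ((κ:ℂ)^2) • 1) * Φ x)
    (hΦQ : ∀ x ≥ (0:ℝ), Φ x * Q = Φ x)
    (hWronsk : ∀ x ≥ (0:ℝ), (Φ' x)ᴴ * Φ x = (Φ x)ᴴ * Φ' x)
    (hW : ∀ x ∈ Set.Ici (0:ℝ), HasDerivWithinAt W (-((Φ x)ᴴ * Φ x)) (Set.Ici (0:ℝ)) x)
    (hWp : ∀ x ∈ Set.Ici (0:ℝ), HasDerivWithinAt Wp (Wp' x) (Set.Ici (0:ℝ)) x)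
    (h1 : ∀ x ≥ (0:ℝ), W x * Wp x = Q)
    (h2 : ∀ x ≥ (0:ℝ), Wp x * W x = Q)
    (h3 : ∀ x ≥ (0:ℝ), Wp x * Q = Wp x)
    (h4 : ∀ x ≥ (0:ℝ), Q * Wp x = Wp x)
    (hg : ∀ x ∈ Set.Ici (0:ℝ),
      HasDerivWithinAt (fun t => Φ t * Wp t * (Φ t)ᴴ) (g x) (Set.Ici (0:ℝ)) x) :
    ∀ y ≥ (0:ℝ), ∀ x ∈ Set.Ici (0:ℝ),
      HasDerivWithinAt (fun t => Φ t * Wp t * (Φ y)ᴴ)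
        (Φ' x * Wp x * (Φ y)ᴴ + Φ x * Wp' x * (Φ y)ᴴ) (Set.Ici (0:ℝ)) x ∧
      HasDerivWithinAt (fun t => Φ' t * Wp t * (Φ y)ᴴ + Φ t * Wp' t * (Φ y)ᴴ)
        (Φ x * Wp x * (Φ'' y)ᴴ
          + (V x + (2:ℂ) • g x) * (Φ x * Wp x * (Φ y)ᴴ)
          - Φ x * Wp x * (Φ y)ᴴ * V y) (Set.Ici (0:ℝ)) x := by
  intro y hy x hx
  have hx' : (0:ℝ) ≤ x := hx
  -- Wp' identity
  have hWp'eq : ∀ t ∈ Ici (0:ℝ), Wp' t = Wp t * ((Φ t)ᴴ * Φ t) * Wp t := by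
    intro t ht
    have e1 : HasDerivWithinAt (fun u => Wp u * W u)
        (Wp' t * W t + Wp t * -((Φ t)ᴴ * Φ t)) (Ici 0) t := matmul (hWp t ht) (hW t ht)
    have e2 : HasDerivWithinAt (fun u => Wp u * W u) 0 (Ici 0) t :=
      (hasDerivWithinAt_const t _ Q).congr (fun u hu => h2 u hu) (h2 t ht)
    have e3 := deriv_unique ht e1 e2
    rw [mul_neg, add_neg_eq_zero] at e3
    have e5 : Wp' t * Q = Wp' t := by
      have f1 : HasDerivWithinAt (fun u => Wp u * Q) (Wp' t * Q) (Ici 0) t :=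
        matmul_const (hWp t ht)
      have f2 : HasDerivWithinAt (fun u => Wp u * Q) (Wp' t) (Ici 0) t :=
        (hWp t ht).congr (fun u hu => h3 u hu) (h3 t ht)
      exact deriv_unique ht f1 f2
    calc Wp' t = Wp' t * Q := e5.symm
      _ = Wp' t * (W t * Wp t) := by rw [h1 t ht]
      _ = Wp' t * W t * Wp t := by rw [mul_assoc]
      _ = Wp t * ((Φ t)ᴴ * Φ t) * Wp t := by rw [e3]
  have hA : HasDerivWithinAt (fun t => Φ t * Wp t) (Φ' x * Wp x + Φ x * Wp' x) (Ici 0) x :=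
    matmul (hΦ1 x hx) (hWp x hx)
  constructor
  · simpa [add_mul] using matmul_const hA
  -- second derivative
  have hgeq : g x = (Φ' x * Wp x + Φ x * Wp' x) * (Φ x)ᴴ + (Φ x * Wp x) * (Φ' x)ᴴ :=
    deriv_unique hx (hg x hx) (matmul hA (matct (hΦ1 x hx)))
  have hB : HasDerivWithinAt (fun t => Φ t * Wp t * (Φ t)ᴴ)
      ((Φ' x * Wp x + Φ x * Wp' x) * (Φ x)ᴴ + (Φ x * Wp x) * (Φ' x)ᴴ) (Ici 0) x :=
    matmul hA (matct (hΦ1 x hx))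
  have hG : HasDerivWithinAt
      (fun t => Φ' t * Wp t * (Φ y)ᴴ + (Φ t * Wp t * (Φ t)ᴴ) * (Φ t * Wp t) * (Φ y)ᴴ)
      ((Φ'' x * Wp x + Φ' x * Wp' x) * (Φ y)ᴴ
        + (((Φ' x * Wp x + Φ x * Wp' x) * (Φ x)ᴴ + (Φ x * Wp x) * (Φ' x)ᴴ) * (Φ x * Wp x)
            + (Φ x * Wp x * (Φ x)ᴴ) * (Φ' x * Wp x + Φ x * Wp' x)) * (Φ y)ᴴ)
      (Ici 0) x :=
    (matmul_const (matmul (hΦ2 x hx) (hWp x hx))).add (matmul_const (matmul hB hA))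
  have hF : HasDerivWithinAt
      (fun t => Φ' t * Wp t * (Φ y)ᴴ + Φ t * Wp' t * (Φ y)ᴴ)
      ((Φ'' x * Wp x + Φ' x * Wp' x) * (Φ y)ᴴ
        + (((Φ' x * Wp x + Φ x * Wp' x) * (Φ x)ᴴ + (Φ x * Wp x) * (Φ' x)ᴴ) * (Φ x * Wp x)
            + (Φ x * Wp x * (Φ x)ᴴ) * (Φ' x * Wp x + Φ x * Wp' x)) * (Φ y)ᴴ)
      (Ici 0) x := by
    refine hG.congr (fun u hu => ?_) ?_
    · rw [hWp'eq u hu]; noncomm_ring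
    · rw [hWp'eq x hx]; noncomm_ring
  have hctY : ((Φ'' y)ᴴ : Matrix (Fin n) (Fin n) ℂ)
      = (Φ y)ᴴ * V y + ((κ:ℂ)^2) • (Φ y)ᴴ := by
    rw [hΦeq y hy]
    simp [conjTranspose_mul, conjTranspose_add, conjTranspose_smul, hVherm y hy,
      mul_add, mul_one, Matrix.mul_smul]
  have key : ∀ Z : Matrix (Fin n) (Fin n) ℂ,
      (Φ x)ᴴ * (Φ' x * Z) = (Φ' x)ᴴ * (Φ x * Z) := fun Z => by
    rw [← mul_assoc, ← mul_assoc, hWronsk x hx']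
  have hDT : Φ x * Wp x * (Φ'' y)ᴴ
          + (V x + (2:ℂ) • g x) * (Φ x * Wp x * (Φ y)ᴴ)
          - Φ x * Wp x * (Φ y)ᴴ * V y
      = (Φ'' x * Wp x + Φ' x * Wp' x) * (Φ y)ᴴ
        + (((Φ' x * Wp x + Φ x * Wp' x) * (Φ x)ᴴ + (Φ x * Wp x) * (Φ' x)ᴴ) * (Φ x * Wp x)
            + (Φ x * Wp x * (Φ x)ᴴ) * (Φ' x * Wp x + Φ x * Wp' x)) * (Φ y)ᴴ := by
    rw [hctY, hgeq, hWp'eq x hx, hΦeq x hx']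
    simp only [mul_add, add_mul, mul_assoc, smul_mul_assoc, mul_smul_comm, mul_one, one_mul,
      Matrix.mul_smul, Matrix.smul_mul]
    simp only [key]
    module
  exact hDT ▸ hF
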